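/- arXiv:1709.06349 — 2 statements merged into one kernel-verified Lean document; each statement's English description precedes it below -/
import Mathlib

section
/- Let G = (V,E) be a bi-coloured multigraph which is (2,2)-tight and let H be a proper subgraph of G with f(H) = 2. If there is no vertex u in V(G) \ V(H) and two vertices a, b in V(H) with edges (au,c), (bu,c) in E of the same colour c, then the contraction G/H is a bi-coloured multigraph (with simple monochrome subgraphs) which is (2,2)-tight. -/
open scoped BigOperators

noncomputable section

/-- The two edge colours: `b` (blue) and `r` (red). -/
inductive Col : Type
  | b : Col
  | r : Col
  deriving DecidableEq

/-- A bi-coloured multigraph on a finite vertex set: each colour class is a set of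
unordered pairs of distinct vertices (so each monochrome subgraph is a simple graph). -/
structure BiGraph (α : Type) [DecidableEq α] : Type where
  verts : Finset α
  edges : Col → Finset (Sym2 α)
  valid : ∀ c, ∀ e ∈ edges c, ¬ e.IsDiag ∧ ∀ x ∈ e, x ∈ verts

namespace BiGraph

variable {α : Type} [DecidableEq α]

/-- The number of edges (blue and red edges counted separately). -/
def edgeCount (G : BiGraph α) : ℕ :=
  (G.edges Col.b).card + (G.edges Col.r).card

def IsSubgraph (H G : BiGraph α) : Prop :=
  H.verts ⊆ G.verts ∧ ∀ c, H.edges c ⊆ G.edges c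

def ProperSubgraph (H G : BiGraph α) : Prop :=
  H.IsSubgraph G ∧ (H.verts ≠ G.verts ∨ ∃ c, H.edges c ≠ G.edges c)

/-- `(2,k)`-sparsity: every subgraph with at least one edge satisfies `|E| ≤ 2|V| - k`. -/
def Sparse (G : BiGraph α) (k : ℤ) : Prop :=
  ∀ H : BiGraph α, H.IsSubgraph G → 0 < H.edgeCount →
    (H.edgeCount : ℤ) ≤ 2 * (H.verts.card : ℤ) - k

/-- `(2,k)`-tightness. -/
def Tight (G : BiGraph α) (k : ℤ) : Prop :=
  G.Sparse k ∧ (G.edgeCount : ℤ) = 2 * (G.verts.card : ℤ) - k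

/-- `f(G) = 2|V| - |E|`. -/
def fcount (G : BiGraph α) : ℤ :=
  2 * (G.verts.card : ℤ) - (G.edgeCount : ℤ)

/-- `(2,3)`-limited: every purely blue subgraph is `(2,3)`-sparse. -/
def Limited23 (G : BiGraph α) : Prop :=
  ∀ H : BiGraph α, H.IsSubgraph G → H.edges Col.r = ∅ → 0 < H.edgeCount →
    (H.edgeCount : ℤ) ≤ 2 * (H.verts.card : ℤ) - 3

/-- A `(2,3)`-circuit. -/
def IsCircuit23 (G : BiGraph α) : Prop :=
  (G.edgeCount : ℤ) = 2 * (G.verts.card : ℤ) - 2 ∧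
  ∀ H : BiGraph α, H.ProperSubgraph G → 0 < H.edgeCount →
    (H.edgeCount : ℤ) ≤ 2 * (H.verts.card : ℤ) - 3

/-- Delete the edge `e₀` of colour `c`. -/
def deleteEdge (G : BiGraph α) (c : Col) (e₀ : Sym2 α) : BiGraph α where
  verts := G.verts
  edges := fun d => if d = c then (G.edges d).erase e₀ else G.edges d
  valid := by
    intro d e he
    by_cases h : d = c
    · rw [if_pos h] at he
      exact G.valid d e (Finset.mem_of_mem_erase he)
    · rw [if_neg h] at he
      exact G.valid d e he

/-- The complete bi-coloured multigraph on a vertex set: one blue and one red edge on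
each pair of distinct vertices. -/
def complete (Vs : Finset α) : BiGraph α where
  verts := Vs
  edges := fun _ => Vs.sym2.filter (fun e => ¬ e.IsDiag)
  valid := by
    intro c e he
    rw [Finset.mem_filter] at he
    exact ⟨he.2, fun x hx => Finset.mem_sym2_iff.mp he.1 x hx⟩

/-- The degree of a vertex (edges of both colours counted). -/
def degree (G : BiGraph α) (v : α) : ℕ :=
  ((G.edges Col.b).filter (fun e => v ∈ e)).card +
    ((G.edges Col.r).filter (fun e => v ∈ e)).card

/-- `G` is a single vertex with no edges. -/
def IsK1 (G : BiGraph α) : Prop :=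
  (∃ v, G.verts = {v}) ∧ ∀ c, G.edges c = ∅

/-- `G` is a bi-coloured `K₄` (each pair of the four vertices joined by exactly one
edge) with at least 5 edges of the same colour. -/
def IsK4Base (G : BiGraph α) : Prop :=
  G.verts.card = 4 ∧
  G.edges Col.b ∪ G.edges Col.r = G.verts.sym2.filter (fun e => ¬ e.IsDiag) ∧
  Disjoint (G.edges Col.b) (G.edges Col.r) ∧
  (5 ≤ (G.edges Col.b).card ∨ 5 ≤ (G.edges Col.r).card)

/-- 0-extension: add a new vertex `v` of degree 2, either joined to two distinct
existing vertices by edges of arbitrary colours, or joined to a single existing vertex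
by one blue and one red edge. -/
def ZeroExt (G G' : BiGraph α) : Prop :=
  ∃ v, v ∉ G.verts ∧ G'.verts = insert v G.verts ∧
    ((∃ x y c₁ c₂, x ∈ G.verts ∧ y ∈ G.verts ∧ x ≠ y ∧
        ∀ d, G'.edges d = G.edges d ∪
          ((if d = c₁ then {s(x, v)} else ∅) ∪ (if d = c₂ then {s(y, v)} else ∅))) ∨
     (∃ x, x ∈ G.verts ∧ ∀ d, G'.edges d = insert s(x, v) (G.edges d)))

/-- 1-extension with explicit data: delete the edge `s(x,y)` of colour `c`, add a new
vertex `v` with replacement edges `(xv, c₂)`, `(yv, c₃)` and a third edge `(zv, c₄)`;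
`z` may equal `x` or `y` provided the resulting parallel edges at `v` have distinct
colours. The colour case is `c → {c₂, c₃}`. -/
def OneExtOn (G G' : BiGraph α) (c c₂ c₃ : Col) (x y z v : α) : Prop :=
  x ≠ y ∧ x ∈ G.verts ∧ y ∈ G.verts ∧ z ∈ G.verts ∧ v ∉ G.verts ∧
  s(x, y) ∈ G.edges c ∧
  ∃ c₄ : Col, (z = x → c₄ ≠ c₂) ∧ (z = y → c₄ ≠ c₃) ∧
    G'.verts = insert v G.verts ∧
    ∀ d, G'.edges d =
      ((if d = c then (G.edges d).erase s(x, y) else G.edges d)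
        ∪ (if d = c₂ then {s(x, v)} else ∅))
        ∪ ((if d = c₃ then {s(y, v)} else ∅)
        ∪ (if d = c₄ then {s(z, v)} else ∅))

def OneExt (G G' : BiGraph α) (c c₂ c₃ : Col) : Prop :=
  ∃ x y z v, OneExtOn G G' c c₂ c₃ x y z v

/-- Colour-restricted 1-extension: the deleted edge and both replacement edges have the
same colour, and the new vertex has three distinct neighbours. -/
def ColRes1Ext (G G' : BiGraph α) : Prop :=
  ∃ c x y z v, z ≠ x ∧ z ≠ y ∧ OneExtOn G G' c c c x y z v

/-- Colour-restricted vertex split on an edge of colour `c`: the vertex `v` is split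
into `v` and `w`, the chosen neighbour `x` (with `(xv,c) ∈ E`) becomes joined to both,
the edge `(vw, c)` is added, and every other edge at `v` goes to `v` or to `w`. -/
def ColResVSplitC (G G' : BiGraph α) (c : Col) : Prop :=
  ∃ (v w x : α) (T : Col → Finset (Sym2 α)),
    v ∈ G.verts ∧ w ∉ G.verts ∧ s(x, v) ∈ G.edges c ∧
    (∀ d, T d ⊆ (G.edges d).filter (fun e => v ∈ e)) ∧ s(x, v) ∉ T c ∧
    G'.verts = insert w G.verts ∧
    ∀ d, G'.edges d =
      ((G.edges d \ T d) ∪ (T d).image (Sym2.map (fun u => if u = v then w else u)))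
        ∪ (if d = c then {s(x, w), s(v, w)} else ∅)

def ColResVSplit (G G' : BiGraph α) : Prop :=
  ∃ c, ColResVSplitC G G' c

/-- Graph extension: `G` is obtained from `G₀` by deleting the vertex `v`, adding a
disjoint copy of `H` (with `f(H) = 2`), and replacing each edge `(xv, c)` of `G₀` by an
edge `(x, m c x)` of colour `c` with `m c x` a vertex of `H`. -/
def GraphExt (G₀ G H : BiGraph α) (v : α) : Prop :=
  v ∈ G₀.verts ∧ Disjoint H.verts G₀.verts ∧ H.fcount = 2 ∧
  G.verts = (G₀.verts.erase v) ∪ H.verts ∧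
  ∃ m : Col → α → α, (∀ d x, m d x ∈ H.verts) ∧
    ∀ d, G.edges d =
      (((G₀.edges d).filter (fun e => v ∉ e)) ∪ H.edges d) ∪
        (((G₀.verts.erase v).filter (fun x => s(x, v) ∈ G₀.edges d)).image
          (fun x => s(x, m d x)))

/-- `K₂ ⊔ K₂` substitution: in `G'` the vertices `x, y, z` carry the four edges
`(xy,b), (xy,r), (yz,b), (yz,r)` and `(xz,r)` is not an edge; `G` is obtained by
deleting the two blue edges, adding a new vertex `v` and the red edges
`(xz,r), (xv,r), (yv,r), (zv,r)`, so that `x, y, z, v` span a red `K₄`. -/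
def K2SubstOn (G' G : BiGraph α) (x y z v : α) : Prop :=
  x ≠ y ∧ y ≠ z ∧ x ≠ z ∧
  x ∈ G'.verts ∧ y ∈ G'.verts ∧ z ∈ G'.verts ∧ v ∉ G'.verts ∧
  s(x, y) ∈ G'.edges Col.b ∧ s(x, y) ∈ G'.edges Col.r ∧
  s(y, z) ∈ G'.edges Col.b ∧ s(y, z) ∈ G'.edges Col.r ∧
  s(x, z) ∉ G'.edges Col.r ∧
  G.verts = insert v G'.verts ∧
  G.edges Col.b = ((G'.edges Col.b).erase s(x, y)).erase s(y, z) ∧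
  G.edges Col.r =
    insert s(x, z) (insert s(x, v) (insert s(y, v) (insert s(z, v) (G'.edges Col.r))))

end BiGraph

namespace BiGraph

variable {α : Type} [DecidableEq α]

/-- The contraction map sending every vertex of `S` to `v₀`. -/
def cf (S : Finset α) (v₀ : α) : α → α := fun u => if u ∈ S then v₀ else u

lemma cf_cases {S : Finset α} {v₀ a b : α} (hv₀ : v₀ ∈ S)
    (h : cf S v₀ a = cf S v₀ b) : a = b ∨ (a ∈ S ∧ b ∈ S) := by
  by_cases ha : a ∈ S <;> by_cases hb : b ∈ S
  · exact Or.inr ⟨ha, hb⟩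
  · simp only [cf, if_pos ha, if_neg hb] at h; subst h; exact absurd hv₀ hb
  · simp only [cf, if_neg ha, if_pos hb] at h; subst h; exact absurd hv₀ ha
  · simp only [cf, if_neg ha, if_neg hb] at h; exact Or.inl h

omit [DecidableEq α] in
lemma sym2_map_eq_self {f : α → α} {e : Sym2 α} (h : ∀ x ∈ e, f x = x) :
    Sym2.map f e = e := by
  induction e using Sym2.ind with
  | _ x y =>
    rw [Sym2.map_pair_eq, h x (Sym2.mem_mk_left x y), h y (Sym2.mem_mk_right x y)]

lemma contract_pair_eq (G : BiGraph α) {S : Finset α} {v₀ : α} (hv₀ : v₀ ∈ S)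
    (hno : ∀ (u a b : α) (c : Col), u ∈ G.verts → u ∉ S → a ∈ S → b ∈ S →
      s(a, u) ∈ G.edges c → s(b, u) ∈ G.edges c → a = b)
    {d : Col} {x₁ y₁ x₂ y₂ : α}
    (h₁ : s(x₁, y₁) ∈ G.edges d) (h₂ : s(x₂, y₂) ∈ G.edges d)
    (hn₁ : ¬(x₁ ∈ S ∧ y₁ ∈ S))
    (hfx : cf S v₀ x₁ = cf S v₀ x₂) (hfy : cf S v₀ y₁ = cf S v₀ y₂) :
    s(x₁, y₁) = s(x₂, y₂) := by
  rcases cf_cases hv₀ hfx with rfl | ⟨hx₁, hx₂⟩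
  · rcases cf_cases hv₀ hfy with rfl | ⟨hy₁, hy₂⟩
    · rfl
    · have hx : x₁ ∉ S := fun h => hn₁ ⟨h, hy₁⟩
      have hxG : x₁ ∈ G.verts := (G.valid d _ h₁).2 x₁ (Sym2.mem_mk_left _ _)
      have hyy : y₁ = y₂ := hno x₁ y₁ y₂ d hxG hx hy₁ hy₂
        (by rw [Sym2.eq_swap]; exact h₁) (by rw [Sym2.eq_swap]; exact h₂)
      rw [hyy]
  · rcases cf_cases hv₀ hfy with rfl | ⟨hy₁, hy₂⟩
    · have hy : y₁ ∉ S := fun h => hn₁ ⟨hx₁, h⟩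
      have hyG : y₁ ∈ G.verts := (G.valid d _ h₁).2 y₁ (Sym2.mem_mk_right _ _)
      have hxx : x₁ = x₂ := hno y₁ x₁ x₂ d hyG hy hx₁ hx₂ h₁ h₂
      rw [hxx]
    · exact absurd ⟨hx₁, hy₁⟩ hn₁

lemma contract_injOn (G : BiGraph α) {S : Finset α} {v₀ : α} (hv₀ : v₀ ∈ S)
    (hno : ∀ (u a b : α) (c : Col), u ∈ G.verts → u ∉ S → a ∈ S → b ∈ S →
      s(a, u) ∈ G.edges c → s(b, u) ∈ G.edges c → a = b) (d : Col) :
    Set.InjOn (Sym2.map (cf S v₀))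
      ↑((G.edges d).filter (fun e => e ∉ S.sym2)) := by
  intro e₁ he₁ e₂ he₂ heq
  rw [Finset.mem_coe, Finset.mem_filter] at he₁ he₂
  induction e₁ using Sym2.ind with
  | _ x₁ y₁ =>
  induction e₂ using Sym2.ind with
  | _ x₂ y₂ =>
  rw [Sym2.map_pair_eq, Sym2.map_pair_eq] at heq
  have hn₁ : ¬(x₁ ∈ S ∧ y₁ ∈ S) := fun hh => he₁.2 (Finset.mk_mem_sym2_iff.mpr hh)
  rcases Sym2.eq_iff.mp heq with ⟨hfx, hfy⟩ | ⟨hfx, hfy⟩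
  · exact contract_pair_eq G hv₀ hno he₁.1 he₂.1 hn₁ hfx hfy
  · have h₂' : s(y₂, x₂) ∈ G.edges d := by rw [Sym2.eq_swap]; exact he₂.1
    have := contract_pair_eq G hv₀ hno he₁.1 h₂' hn₁ hfx hfy
    rw [this, Sym2.eq_swap]

/-- The contraction of the vertex set `S` to the vertex `v₀`. -/
def contractG (G : BiGraph α) (S : Finset α) (v₀ : α) (hv₀ : v₀ ∈ S) : BiGraph α where
  verts := insert v₀ (G.verts \ S)
  edges := fun d => ((G.edges d).filter (fun e => e ∉ S.sym2)).image
    (Sym2.map (fun u => if u ∈ S then v₀ else u))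
  valid := by
    intro d e he
    obtain ⟨e', he', rfl⟩ := Finset.mem_image.mp he
    obtain ⟨heG, hen⟩ := Finset.mem_filter.mp he'
    have hmem : ∀ w ∈ G.verts, cf S v₀ w ∈ insert v₀ (G.verts \ S) := by
      intro w hw
      by_cases hwS : w ∈ S
      · rw [cf, if_pos hwS]; exact Finset.mem_insert_self _ _
      · rw [cf, if_neg hwS]
        exact Finset.mem_insert_of_mem (Finset.mem_sdiff.mpr ⟨hw, hwS⟩)
    induction e' using Sym2.ind with
    | _ x y =>
    constructor
    · show ¬ (Sym2.map (cf S v₀) s(x, y)).IsDiag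
      rw [Sym2.map_pair_eq, Sym2.mk_isDiag_iff]
      intro hfeq
      rcases cf_cases hv₀ hfeq with rfl | ⟨hx, hy⟩
      · exact (G.valid d _ heG).1 (Sym2.mk_isDiag_iff.mpr rfl)
      · exact hen (Finset.mk_mem_sym2_iff.mpr ⟨hx, hy⟩)
    · intro z hz
      rw [show (Sym2.map (fun u => if u ∈ S then v₀ else u) s(x, y)) =
          s(cf S v₀ x, cf S v₀ y) from Sym2.map_pair_eq _ _ _] at hz
      rcases Sym2.mem_iff.mp hz with rfl | rfl
      · exact hmem x ((G.valid d _ heG).2 x (Sym2.mem_mk_left _ _))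
      · exact hmem y ((G.valid d _ heG).2 y (Sym2.mem_mk_right _ _))

/-- The subgraph of `G` induced on `S`. -/
def inducedOn (G : BiGraph α) (S : Finset α) : BiGraph α where
  verts := S
  edges := fun d => (G.edges d).filter (· ∈ S.sym2)
  valid := by
    intro d e he
    rw [Finset.mem_filter] at he
    exact ⟨(G.valid d e he.1).1, fun x hx => Finset.mem_sym2_iff.mp he.2 x hx⟩

/-- The pullback of a subgraph `K` of the contraction: replace `v₀` by all of `S`
together with all induced edges. -/
def pullback (G K : BiGraph α) (S : Finset α) (v₀ : α) (hv₀ : v₀ ∈ S) : BiGraph α where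
  verts := (K.verts.erase v₀) ∪ S
  edges := fun d => (G.edges d).filter (· ∈ S.sym2) ∪
    (G.edges d).filter (fun e => e ∉ S.sym2 ∧ Sym2.map (cf S v₀) e ∈ K.edges d)
  valid := by
    intro d e he
    rcases Finset.mem_union.mp he with h | h
    · rw [Finset.mem_filter] at h
      exact ⟨(G.valid d e h.1).1, fun x hx =>
        Finset.mem_union_right _ (Finset.mem_sym2_iff.mp h.2 x hx)⟩
    · rw [Finset.mem_filter] at h
      obtain ⟨heG, hen, hmap⟩ := h
      refine ⟨(G.valid d e heG).1, fun x hx => ?_⟩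
      by_cases hxS : x ∈ S
      · exact Finset.mem_union_right _ hxS
      · have hfx : cf S v₀ x = x := if_neg hxS
        have hxm : x ∈ Sym2.map (cf S v₀) e := Sym2.mem_map.mpr ⟨x, hx, hfx⟩
        have hxK : x ∈ K.verts := (K.valid d _ hmap).2 x hxm
        have hxv : x ≠ v₀ := fun h => hxS (h ▸ hv₀)
        exact Finset.mem_union_left _ (Finset.mem_erase.mpr ⟨hxv, hxK⟩)

end BiGraph



/-- If `G` is `(2,2)`-tight, `H` is a proper subgraph with `f(H) = 2`,
and no vertex outside `H` has two same-coloured edges to two vertices of `H`, then the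
contraction `G/H` exists as a bi-coloured multigraph (with simple monochrome
subgraphs) and is `(2,2)`-tight. -/
theorem contraction_of_tight_subgraph_tight
    {α : Type} [DecidableEq α] (G H : BiGraph α)
    (hG : G.Tight 2) (hsub : H.ProperSubgraph G) (hf : H.fcount = 2)
    (hno : ¬ ∃ (u a b : α) (c : Col), u ∈ G.verts ∧ u ∉ H.verts ∧
      a ∈ H.verts ∧ b ∈ H.verts ∧ a ≠ b ∧ s(a, u) ∈ G.edges c ∧ s(b, u) ∈ G.edges c) :
    ∀ v₀ ∈ H.verts, ∃ G' : BiGraph α,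
      G'.verts = insert v₀ (G.verts \ H.verts) ∧
      (∀ d, G'.edges d = ((G.edges d).filter (fun e => e ∉ H.verts.sym2)).image
        (Sym2.map (fun u => if u ∈ H.verts then v₀ else u))) ∧
      G'.Tight 2 := by
  intro v₀ hv₀
  obtain ⟨⟨hHG, hHe⟩, -⟩ := hsub
  have hno' : ∀ (u a b : α) (c : Col), u ∈ G.verts → u ∉ H.verts → a ∈ H.verts →
      b ∈ H.verts → s(a, u) ∈ G.edges c → s(b, u) ∈ G.edges c → a = b := by
    intro u a b c h1 h2 h3 h4 h5 h6
    by_contra hab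
    exact hno ⟨u, a, b, c, h1, h2, h3, h4, hab, h5, h6⟩
  have hinj : ∀ d, Set.InjOn (Sym2.map (BiGraph.cf H.verts v₀))
      ↑((G.edges d).filter (fun e => e ∉ H.verts.sym2)) :=
    fun d => BiGraph.contract_injOn G hv₀ hno' d
  set G' : BiGraph α := BiGraph.contractG G H.verts v₀ hv₀ with hG'
  set I : BiGraph α := BiGraph.inducedOn G H.verts with hI
  have hcard_im : ∀ d, (G'.edges d).card =
      ((G.edges d).filter (fun e => e ∉ H.verts.sym2)).card :=
    fun d => Finset.card_image_of_injOn (hinj d)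
  have hsplit : ∀ d, ((G.edges d).filter (· ∈ H.verts.sym2)).card +
      ((G.edges d).filter (fun e => e ∉ H.verts.sym2)).card = (G.edges d).card :=
    fun d => Finset.card_filter_add_card_filter_not (p := (· ∈ H.verts.sym2))
  have hIedges : ∀ d, I.edges d = (G.edges d).filter (· ∈ H.verts.sym2) := fun d => rfl
  have hIsub : I.IsSubgraph G := ⟨hHG, fun d => Finset.filter_subset _ _⟩
  have hHI : H.edgeCount ≤ I.edgeCount := by
    have hsub' : ∀ d, H.edges d ⊆ I.edges d := by
      intro d e he
      rw [hIedges d, Finset.mem_filter]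
      exact ⟨hHe d he, Finset.mem_sym2_iff.mpr (H.valid d e he).2⟩
    exact Nat.add_le_add (Finset.card_le_card (hsub' Col.b))
      (Finset.card_le_card (hsub' Col.r))
  have hfH : (H.edgeCount : ℤ) = 2 * (H.verts.card : ℤ) - 2 := by
    have := hf
    unfold BiGraph.fcount at this
    linarith
  have hIverts : I.verts = H.verts := rfl
  have hIcount : (I.edgeCount : ℤ) = 2 * (H.verts.card : ℤ) - 2 := by
    by_cases hpos : 0 < I.edgeCount
    · have h1 := hG.1 I hIsub hpos
      rw [hIverts] at h1
      omega
    · omega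
  have hEc : ∀ d, (I.edges d).card + (G'.edges d).card = (G.edges d).card := by
    intro d
    rw [hcard_im d, hIedges d]
    exact hsplit d
  have hEcount : I.edgeCount + G'.edgeCount = G.edgeCount := by
    have hb := hEc Col.b
    have hr := hEc Col.r
    unfold BiGraph.edgeCount
    omega
  have hv₀n : v₀ ∉ G.verts \ H.verts := fun h => (Finset.mem_sdiff.mp h).2 hv₀
  have hVc : G'.verts.card = (G.verts \ H.verts).card + 1 := by
    rw [show G'.verts = insert v₀ (G.verts \ H.verts) from rfl,
      Finset.card_insert_of_notMem hv₀n]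
  have hsd : (G.verts \ H.verts).card = G.verts.card - H.verts.card :=
    Finset.card_sdiff_of_subset hHG
  have hle : H.verts.card ≤ G.verts.card := Finset.card_le_card hHG
  have hGE := hG.2
  refine ⟨G', rfl, fun d => rfl, ?_, ?_⟩
  · -- Sparse
    intro K hK hKpos
    by_cases hvK : v₀ ∈ K.verts
    · set P : BiGraph α := BiGraph.pullback G K H.verts v₀ hv₀ with hP
      have hPsub : P.IsSubgraph G := by
        constructor
        · intro x hx
          rcases Finset.mem_union.mp hx with hx | hx
          · obtain ⟨hxne, hxK⟩ := Finset.mem_erase.mp hx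
            rcases Finset.mem_insert.mp (hK.1 hxK) with h | h
            · exact absurd h hxne
            · exact (Finset.mem_sdiff.mp h).1
          · exact hHG hx
        · intro d
          exact Finset.union_subset (Finset.filter_subset _ _) (Finset.filter_subset _ _)
      have hPcard : ∀ d, (P.edges d).card = (I.edges d).card + (K.edges d).card := by
        intro d
        have hdisj : Disjoint ((G.edges d).filter (· ∈ H.verts.sym2))
            ((G.edges d).filter (fun e => e ∉ H.verts.sym2 ∧
              Sym2.map (BiGraph.cf H.verts v₀) e ∈ K.edges d)) :=
          Finset.disjoint_left.mpr (fun e h1 h2 =>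
            absurd (Finset.mem_filter.mp h1).2 (Finset.mem_filter.mp h2).2.1)
        rw [show P.edges d = _ ∪ _ from rfl, Finset.card_union_of_disjoint hdisj,
          hIedges d]
        congr 1
        have hss : ((G.edges d).filter (fun e => e ∉ H.verts.sym2 ∧
            Sym2.map (BiGraph.cf H.verts v₀) e ∈ K.edges d)) ⊆
            ((G.edges d).filter (fun e => e ∉ H.verts.sym2)) := by
          intro e he
          rw [Finset.mem_filter] at he ⊢
          exact ⟨he.1, he.2.1⟩
        have himg : ((G.edges d).filter (fun e => e ∉ H.verts.sym2 ∧
            Sym2.map (BiGraph.cf H.verts v₀) e ∈ K.edges d)).image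
            (Sym2.map (BiGraph.cf H.verts v₀)) = K.edges d := by
          ext e'
          constructor
          · intro he'
            obtain ⟨e, he, rfl⟩ := Finset.mem_image.mp he'
            exact (Finset.mem_filter.mp he).2.2
          · intro he'
            have hm := hK.2 d he'
            obtain ⟨e, he, heq⟩ := Finset.mem_image.mp hm
            obtain ⟨heG, hen⟩ := Finset.mem_filter.mp he
            refine Finset.mem_image.mpr ⟨e, Finset.mem_filter.mpr ⟨heG, hen, ?_⟩, heq⟩
            rw [← heq] at he'
            exact he'
        have hci := Finset.card_image_of_injOn ((hinj d).mono (Finset.coe_subset.mpr hss))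
        rw [himg] at hci
        exact hci.symm
      have hdV : Disjoint (K.verts.erase v₀) H.verts := by
        rw [Finset.disjoint_left]
        intro x hx hxH
        obtain ⟨hxne, hxK⟩ := Finset.mem_erase.mp hx
        rcases Finset.mem_insert.mp (hK.1 hxK) with h | h
        · exact hxne h
        · exact (Finset.mem_sdiff.mp h).2 hxH
      have hPverts : P.verts.card = (K.verts.card - 1) + H.verts.card := by
        rw [show P.verts = (K.verts.erase v₀) ∪ H.verts from rfl,
          Finset.card_union_of_disjoint hdV, Finset.card_erase_of_mem hvK]
      have hK1 : 1 ≤ K.verts.card := Finset.card_pos.mpr ⟨v₀, hvK⟩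
      have hPE : P.edgeCount = I.edgeCount + K.edgeCount := by
        have hb := hPcard Col.b
        have hr := hPcard Col.r
        unfold BiGraph.edgeCount
        omega
      have hPpos : 0 < P.edgeCount := by omega
      have hGP := hG.1 P hPsub hPpos
      omega
    · refine hG.1 K ⟨?_, ?_⟩ hKpos
      · intro x hx
        rcases Finset.mem_insert.mp (hK.1 hx) with rfl | h
        · exact absurd hx hvK
        · exact (Finset.mem_sdiff.mp h).1
      · intro d e he
        have hm := hK.2 d he
        obtain ⟨e', he', heq⟩ := Finset.mem_image.mp hm
        obtain ⟨heG, hen⟩ := Finset.mem_filter.mp he'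
        have hfix : ∀ x ∈ e', (fun u => if u ∈ H.verts then v₀ else u) x = x := by
          intro x hx
          by_cases hxH : x ∈ H.verts
          · exfalso
            have hv₀m : v₀ ∈ Sym2.map (fun u => if u ∈ H.verts then v₀ else u) e' :=
              Sym2.mem_map.mpr ⟨x, hx, if_pos hxH⟩
            rw [heq] at hv₀m
            exact hvK ((K.valid d e he).2 v₀ hv₀m)
          · exact if_neg hxH
        rw [BiGraph.sym2_map_eq_self hfix] at heq
        rwa [← heq]
  · -- tight count
    omega
end
end

section
/- Let G = (V,E) be a bi-coloured multigraph which is (2,2)-tight, and suppose x, y, z induce a subgraph isomorphic to K₃ with coloured edges (xy,c), (xz,c), (yz,c) all of the same colour c. If there is no vertex a in V \ {x,y,z} with two edges of the same colour to {x,y,z}, and there is no subgraph Y of G with f(Y) = 2 containing x and y but not z, then the bi-coloured multigraph obtained by the edge contraction of (xy,c) is (2,2)-tight with simple monochrome subgraphs. -/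
open scoped BigOperators

noncomputable section

namespace BiGraph

variable {α : Type} [DecidableEq α]

/-- Add a single edge of colour `c0` to a bi-coloured multigraph. -/
def addE (K : BiGraph α) (c0 : Col) (e : Sym2 α) (h1 : ¬ e.IsDiag)
    (h2 : ∀ u ∈ e, u ∈ K.verts) : BiGraph α where
  verts := K.verts
  edges := fun d => if d = c0 then insert e (K.edges d) else K.edges d
  valid := by
    intro d f hf
    by_cases hd : d = c0
    · rw [if_pos hd] at hf
      rcases Finset.mem_insert.mp hf with h | h
      · subst h; exact ⟨h1, h2⟩
      · exact K.valid d f h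
    · rw [if_neg hd] at hf
      exact K.valid d f hf

lemma addE_verts (K : BiGraph α) (c0 : Col) (e : Sym2 α) (h1 : ¬ e.IsDiag)
    (h2 : ∀ u ∈ e, u ∈ K.verts) : (K.addE c0 e h1 h2).verts = K.verts := rfl

lemma addE_edges (K : BiGraph α) (c0 : Col) (e : Sym2 α) (h1 : ¬ e.IsDiag)
    (h2 : ∀ u ∈ e, u ∈ K.verts) (d : Col) :
    (K.addE c0 e h1 h2).edges d = if d = c0 then insert e (K.edges d) else K.edges d := rfl

lemma addE_mem (K : BiGraph α) (c0 : Col) (e : Sym2 α) (h1 : ¬ e.IsDiag)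
    (h2 : ∀ u ∈ e, u ∈ K.verts) : e ∈ (K.addE c0 e h1 h2).edges c0 := by
  rw [addE_edges, if_pos rfl]
  exact Finset.mem_insert_self _ _

lemma addE_edgeCount (K : BiGraph α) (c0 : Col) (e : Sym2 α) (h1 : ¬ e.IsDiag)
    (h2 : ∀ u ∈ e, u ∈ K.verts) (he : e ∉ K.edges c0) :
    (K.addE c0 e h1 h2).edgeCount = K.edgeCount + 1 := by
  unfold edgeCount
  cases c0 <;>
    simp [addE_edges, Finset.card_insert_of_notMem he] <;> omega

lemma addE_isSubgraph (K G : BiGraph α) (c0 : Col) (e : Sym2 α) (h1 : ¬ e.IsDiag)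
    (h2 : ∀ u ∈ e, u ∈ K.verts) (hK : K.IsSubgraph G) (heG : e ∈ G.edges c0) :
    (K.addE c0 e h1 h2).IsSubgraph G := by
  refine ⟨hK.1, fun d f hf => ?_⟩
  rw [addE_edges] at hf
  by_cases hd : d = c0
  · rw [if_pos hd] at hf
    rcases Finset.mem_insert.mp hf with h | h
    · subst h; rw [hd]; exact heG
    · exact hK.2 d h
  · rw [if_neg hd] at hf
    exact hK.2 d hf

lemma edgeCount_pos_of_mem (K : BiGraph α) (d : Col) (e : Sym2 α) (h : e ∈ K.edges d) :
    0 < K.edgeCount := by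
  have hp := Finset.card_pos.mpr ⟨e, h⟩
  unfold edgeCount
  cases d <;> omega

end BiGraph

/-- If `G` is `(2,2)`-tight, the vertices `x, y, z` induce a
monochrome triangle of colour `c`, no outside vertex has two same-coloured edges to
`{x, y, z}`, and no subgraph `Y` with `f(Y) = 2` contains `x, y` but not `z`, then the
edge contraction of `(xy, c)` exists as a bi-coloured multigraph (with simple
monochrome subgraphs) and is `(2,2)`-tight. -/
theorem triangle_edge_contraction_tight
    {α : Type} [DecidableEq α] (G : BiGraph α) (c : Col) (x y z : α)
    (hG : G.Tight 2)
    (hxy : x ≠ y) (hxz : x ≠ z) (hyz : y ≠ z)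
    (hexy : s(x, y) ∈ G.edges c) (hexz : s(x, z) ∈ G.edges c)
    (heyz : s(y, z) ∈ G.edges c)
    (hinduced : ∀ (d : Col) (u w : α), u ∈ ({x, y, z} : Finset α) →
      w ∈ ({x, y, z} : Finset α) → s(u, w) ∈ G.edges d →
      d = c ∧ (s(u, w) = s(x, y) ∨ s(u, w) = s(x, z) ∨ s(u, w) = s(y, z)))
    (hno : ∀ a ∈ G.verts, a ∉ ({x, y, z} : Finset α) →
      ∀ d : Col, (({x, y, z} : Finset α).filter (fun w => s(a, w) ∈ G.edges d)).card ≤ 1)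
    (hY : ¬ ∃ Y : BiGraph α, Y.IsSubgraph G ∧ Y.fcount = 2 ∧
      x ∈ Y.verts ∧ y ∈ Y.verts ∧ z ∉ Y.verts) :
    ∃ G' : BiGraph α,
      G'.verts = G.verts.erase y ∧
      (∀ d, G'.edges d = ((if d = c then (G.edges d).erase s(x, y) else G.edges d)).image
        (Sym2.map (fun u => if u = y then x else u))) ∧
      G'.Tight 2 := by
  classical
  obtain ⟨hndxy, hvxy⟩ := G.valid c _ hexy
  obtain ⟨hndxz, hvxz⟩ := G.valid c _ hexz
  have hxV : x ∈ G.verts := hvxy x (by simp)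
  have hyV : y ∈ G.verts := hvxy y (by simp)
  have hzV : z ∈ G.verts := hvxz z (by simp)
  set m : α → α := fun u => if u = y then x else u with hm_def
  have hm_ne : ∀ u, u ≠ y → m u = u := by
    intro u hu; simp only [hm_def, if_neg hu]
  have hmy : m y = x := by simp [hm_def]
  have hmx : m x = x := hm_ne x hxy
  have hmz : m z = z := hm_ne z (Ne.symm hyz)
  have hm_eq : ∀ a u : α, m a = m u → a = u ∨ (a = x ∧ u = y) ∨ (a = y ∧ u = x) := by
    intro a u h
    by_cases ha : a = y
    · by_cases hu : u = y
      · exact Or.inl (ha.trans hu.symm)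
      · subst ha
        rw [hmy, hm_ne u hu] at h
        exact Or.inr (Or.inr ⟨rfl, h.symm⟩)
    · by_cases hu : u = y
      · subst hu
        rw [hm_ne a ha, hmy] at h
        exact Or.inr (Or.inl ⟨h, rfl⟩)
      · rw [hm_ne a ha, hm_ne u hu] at h
        exact Or.inl h
  set S : Col → Finset (Sym2 α) :=
    fun d => if d = c then (G.edges d).erase s(x, y) else G.edges d with hS_def
  have hS_mem : ∀ d e, e ∈ S d ↔ e ∈ G.edges d ∧ e ≠ s(x, y) := by
    intro d e
    by_cases hd : d = c
    · have hSc : S d = (G.edges d).erase s(x, y) := by rw [hS_def]; simp [hd]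
      rw [hSc, Finset.mem_erase]
      exact ⟨fun h => ⟨h.2, h.1⟩, fun h => ⟨h.2, h.1⟩⟩
    · rw [hS_def]
      simp only [if_neg hd]
      refine ⟨fun h => ⟨h, ?_⟩, fun h => h.1⟩
      rintro rfl
      exact hd (hinduced d x y (by simp) (by simp) h).1
  -- basic Sym2 inequalities
  have hxz_ne_xy : s(x, z) ≠ s(x, y) := by
    simp [Sym2.eq_iff, hxy, Ne.symm hyz]
  have hyz_ne_xy : s(y, z) ≠ s(x, y) := by
    simp [Sym2.eq_iff, Ne.symm hxy, Ne.symm hxz]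
  have hxz_ne_yz : s(x, z) ≠ s(y, z) := by
    simp [Sym2.eq_iff, hxy, hxz]
  have hmapxz : Sym2.map m s(x, z) = s(x, z) := by rw [Sym2.map_pair_eq, hmx, hmz]
  have hmapyz : Sym2.map m s(y, z) = s(x, z) := by rw [Sym2.map_pair_eq, hmy, hmz]
  have hxzS : s(x, z) ∈ S c := (hS_mem c _).mpr ⟨hexz, hxz_ne_xy⟩
  have hyzS : s(y, z) ∈ S c := (hS_mem c _).mpr ⟨heyz, hyz_ne_xy⟩
  -- the key collision lemma
  have shared : ∀ (d : Col) (w : α), w ≠ x → w ≠ y → s(w, x) ∈ G.edges d →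
      s(w, y) ∈ G.edges d → d = c ∧ w = z := by
    intro d w hwx hwy hwxE hwyE
    by_cases hwz : w = z
    · subst hwz
      exact ⟨(hinduced d w x (by simp) (by simp) hwxE).1, rfl⟩
    · exfalso
      have hwV : w ∈ G.verts := (G.valid d _ hwxE).2 w (by simp)
      have hwmem : w ∉ ({x, y, z} : Finset α) := by simp [hwx, hwy, hwz]
      have hcard := hno w hwV hwmem d
      have h2card : 1 < (({x, y, z} : Finset α).filter
          (fun t => s(w, t) ∈ G.edges d)).card := by
        rw [Finset.one_lt_card]
        refine ⟨x, ?_, y, ?_, hxy⟩ <;> rw [Finset.mem_filter] <;>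
          exact ⟨by simp, by assumption⟩
      omega
  have pair : ∀ (d : Col) (a b u v : α), s(a, b) ∈ G.edges d → s(u, v) ∈ G.edges d →
      m a = m u → m b = m v →
      s(a, b) = s(u, v) ∨ (d = c ∧ ((s(a, b) = s(x, z) ∧ s(u, v) = s(y, z)) ∨
        (s(a, b) = s(y, z) ∧ s(u, v) = s(x, z)))) := by
    intro d a b u v h1 h2 hau hbv
    have hd1 : a ≠ b := by
      have := (G.valid d _ h1).1
      rwa [Sym2.mk_isDiag_iff, ← ne_eq] at this
    have hd2 : u ≠ v := by
      have := (G.valid d _ h2).1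
      rwa [Sym2.mk_isDiag_iff, ← ne_eq] at this
    rcases hm_eq a u hau with rfl | ⟨rfl, rfl⟩ | ⟨rfl, rfl⟩
    · rcases hm_eq b v hbv with rfl | ⟨rfl, rfl⟩ | ⟨rfl, rfl⟩
      · exact Or.inl rfl
      · -- edges s(a,x), s(a,y)
        obtain ⟨hdc, rfl⟩ := shared d a hd1 hd2 h1 h2
        exact Or.inr ⟨hdc, Or.inl ⟨Sym2.eq_swap, Sym2.eq_swap⟩⟩
      · -- edges s(a,y), s(a,x)
        obtain ⟨hdc, rfl⟩ := shared d a hd2 hd1 h2 h1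
        exact Or.inr ⟨hdc, Or.inr ⟨Sym2.eq_swap, Sym2.eq_swap⟩⟩
    · rcases hm_eq b v hbv with rfl | ⟨rfl, rfl⟩ | ⟨rfl, rfl⟩
      · -- edges s(x,b), s(y,b)
        obtain ⟨hdc, rfl⟩ := shared d b (Ne.symm hd1) (Ne.symm hd2)
          (by rw [Sym2.eq_swap]; exact h1) (by rw [Sym2.eq_swap]; exact h2)
        exact Or.inr ⟨hdc, Or.inl ⟨rfl, rfl⟩⟩
      · exact absurd rfl hd1
      · exact Or.inl Sym2.eq_swap
    · rcases hm_eq b v hbv with rfl | ⟨rfl, rfl⟩ | ⟨rfl, rfl⟩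
      · -- edges s(y,b), s(x,b)
        obtain ⟨hdc, rfl⟩ := shared d b (Ne.symm hd2) (Ne.symm hd1)
          (by rw [Sym2.eq_swap]; exact h2) (by rw [Sym2.eq_swap]; exact h1)
        exact Or.inr ⟨hdc, Or.inr ⟨rfl, rfl⟩⟩
      · exact Or.inl Sym2.eq_swap
      · exact absurd rfl hd1
  have key : ∀ (d : Col) (e₁ e₂ : Sym2 α), e₁ ∈ G.edges d → e₂ ∈ G.edges d →
      Sym2.map m e₁ = Sym2.map m e₂ →
      e₁ = e₂ ∨ (d = c ∧ ((e₁ = s(x, z) ∧ e₂ = s(y, z)) ∨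
        (e₁ = s(y, z) ∧ e₂ = s(x, z)))) := by
    intro d e₁ e₂
    induction e₁ using Sym2.ind with
    | _ a b =>
    induction e₂ using Sym2.ind with
    | _ u v =>
    intro h1 h2 hmap
    rw [Sym2.map_pair_eq, Sym2.map_pair_eq, Sym2.eq_iff] at hmap
    rcases hmap with ⟨hau, hbv⟩ | ⟨hav, hbu⟩
    · exact pair d a b u v h1 h2 hau hbv
    · rcases pair d a b v u h1 (by rw [Sym2.eq_swap]; exact h2) hav hbu with
        h | ⟨hdc, ⟨p, q⟩ | ⟨p, q⟩⟩
      · exact Or.inl (h.trans Sym2.eq_swap)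
      · exact Or.inr ⟨hdc, Or.inl ⟨p, Sym2.eq_swap.trans q⟩⟩
      · exact Or.inr ⟨hdc, Or.inr ⟨p, Sym2.eq_swap.trans q⟩⟩
  -- mapping helpers
  have hmap_fix : ∀ e₀ : Sym2 α, y ∉ e₀ → Sym2.map m e₀ = e₀ := by
    intro e₀
    induction e₀ using Sym2.ind with
    | _ a b =>
    intro h
    rw [Sym2.mem_iff] at h
    push_neg at h
    rw [Sym2.map_pair_eq, hm_ne a (Ne.symm h.1), hm_ne b (Ne.symm h.2)]
  have hmap_x : ∀ e₀ : Sym2 α, y ∈ e₀ → x ∈ Sym2.map m e₀ := by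
    intro e₀ hy
    exact Sym2.mem_map.mpr ⟨y, hy, hmy⟩
  -- validity of the contracted graph
  have hvalid : ∀ (d : Col) (e₀ : Sym2 α), e₀ ∈ S d →
      ¬ (Sym2.map m e₀).IsDiag ∧ ∀ u ∈ Sym2.map m e₀, u ∈ G.verts.erase y := by
    intro d e₀
    induction e₀ using Sym2.ind with
    | _ a b =>
    intro he₀
    obtain ⟨heG, hne⟩ := (hS_mem d _).mp he₀
    obtain ⟨hnd, hv⟩ := G.valid d _ heG
    rw [Sym2.mk_isDiag_iff] at hnd
    rw [Sym2.map_pair_eq]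
    constructor
    · rw [Sym2.mk_isDiag_iff]
      intro hab
      rcases hm_eq a b hab with h | ⟨rfl, rfl⟩ | ⟨rfl, rfl⟩
      · exact hnd h
      · exact hne rfl
      · exact hne Sym2.eq_swap
    · have hmem : ∀ w ∈ (s(a, b) : Sym2 α), m w ∈ G.verts.erase y := by
        intro w hw
        by_cases hwy : w = y
        · subst hwy; rw [hmy]; exact Finset.mem_erase.mpr ⟨hxy, hxV⟩
        · rw [hm_ne w hwy]; exact Finset.mem_erase.mpr ⟨hwy, hv w hw⟩
      intro u hu
      rw [Sym2.mem_iff] at hu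
      rcases hu with rfl | rfl
      · exact hmem a (by simp)
      · exact hmem b (by simp)
  have hvalid' : ∀ (d : Col), ∀ e ∈ (fun d => (S d).image (Sym2.map m)) d,
      ¬ e.IsDiag ∧ ∀ u ∈ e, u ∈ G.verts.erase y := by
    intro d e he
    simp only at he
    obtain ⟨e₀, he₀, rfl⟩ := Finset.mem_image.mp he
    exact hvalid d e₀ he₀
  set G' : BiGraph α :=
    ⟨G.verts.erase y, fun d => (S d).image (Sym2.map m), hvalid'⟩ with hG'_def
  have hG'v : G'.verts = G.verts.erase y := by rw [hG'_def]
  have hG'e : ∀ d, G'.edges d = (S d).image (Sym2.map m) := by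
    intro d; rw [hG'_def]
  -- cardinalities for the tight count
  have hcard_ne : ∀ d, d ≠ c → ((S d).image (Sym2.map m)).card = (G.edges d).card := by
    intro d hd
    have hSd : S d = G.edges d := by rw [hS_def]; simp [hd]
    rw [hSd, Finset.card_image_of_injOn]
    intro e₁ h1 e₂ h2 hE
    rcases key d e₁ e₂ h1 h2 hE with h | ⟨hdc, _⟩
    · exact h
    · exact absurd hdc hd
  have himg_card : ∀ T : Finset (Sym2 α), T ⊆ G.edges c → s(x, z) ∈ T → s(y, z) ∈ T →
      (T.image (Sym2.map m)).card = T.card - 1 := by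
    intro T hTsub hxzT hyzT
    have himg : T.image (Sym2.map m) = (T.erase s(y, z)).image (Sym2.map m) := by
      apply Finset.Subset.antisymm
      · intro e he
        obtain ⟨e₀, he₀, rfl⟩ := Finset.mem_image.mp he
        by_cases h : e₀ = s(y, z)
        · subst h
          exact Finset.mem_image.mpr ⟨s(x, z),
            Finset.mem_erase.mpr ⟨hxz_ne_yz, hxzT⟩, by rw [hmapxz, hmapyz]⟩
        · exact Finset.mem_image.mpr ⟨e₀, Finset.mem_erase.mpr ⟨h, he₀⟩, rfl⟩
      · exact Finset.image_subset_image (Finset.erase_subset _ _)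
    rw [himg, Finset.card_image_of_injOn, Finset.card_erase_of_mem hyzT]
    intro e₁ h1 e₂ h2 hE
    have h1' := Finset.mem_erase.mp h1
    have h2' := Finset.mem_erase.mp h2
    rcases key c e₁ e₂ (hTsub h1'.2) (hTsub h2'.2) hE with h | ⟨_, ⟨_, q⟩ | ⟨p, _⟩⟩
    · exact h
    · exact absurd q h2'.1
    · exact absurd p h1'.1
  have h2c : 2 ≤ (G.edges c).card :=
    Finset.one_lt_card.mpr ⟨s(x, y), hexy, s(x, z), hexz, Ne.symm hxz_ne_xy⟩
  have hcard_c : ((S c).image (Sym2.map m)).card = (G.edges c).card - 2 := by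
    have h1 := himg_card (S c) (fun e he => ((hS_mem c e).mp he).1) hxzS hyzS
    have h2 : (S c).card = (G.edges c).card - 1 := by
      rw [hS_def]; simp [Finset.card_erase_of_mem hexy]
    omega
  have hVpos : 1 ≤ G.verts.card := Finset.card_pos.mpr ⟨y, hyV⟩
  have hVc : (G.verts.erase y).card = G.verts.card - 1 := Finset.card_erase_of_mem hyV
  refine ⟨G', hG'v, ?_, ?_, ?_⟩
  · intro d
    rw [hG'e d, hS_def]
  · -- sparsity
    intro H' hsub hpos
    obtain ⟨hsubV, hsubE⟩ := hsub
    rw [hG'v] at hsubV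
    by_cases hxH : x ∈ H'.verts
    · -- main case : lift H' to a subgraph of G
      have hHvalid : ∀ (d : Col), ∀ e ∈ (fun d =>
          (S d).filter (fun e => Sym2.map m e ∈ H'.edges d)) d,
          ¬ e.IsDiag ∧ ∀ u ∈ e, u ∈ insert y H'.verts := by
        intro d e he
        simp only [Finset.mem_filter] at he
        obtain ⟨heS, heH⟩ := he
        obtain ⟨heG, -⟩ := (hS_mem d e).mp heS
        refine ⟨(G.valid d e heG).1, fun u hu => ?_⟩
        by_cases huy : u = y
        · exact Finset.mem_insert.mpr (Or.inl huy)
        · refine Finset.mem_insert.mpr (Or.inr ?_)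
          have hmu : m u ∈ Sym2.map m e := Sym2.mem_map.mpr ⟨u, hu, rfl⟩
          rw [hm_ne u huy] at hmu
          exact (H'.valid d _ heH).2 u hmu
      set H : BiGraph α := ⟨insert y H'.verts,
        fun d => (S d).filter (fun e => Sym2.map m e ∈ H'.edges d), hHvalid⟩ with hH_def
      have hHv : H.verts = insert y H'.verts := by rw [hH_def]
      have hHe : ∀ d, H.edges d = (S d).filter (fun e => Sym2.map m e ∈ H'.edges d) := by
        intro d; rw [hH_def]
      have hyH' : y ∉ H'.verts := fun h => (Finset.mem_erase.mp (hsubV h)).1 rfl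
      have hHcard : H.verts.card = H'.verts.card + 1 := by
        rw [hHv, Finset.card_insert_of_notMem hyH']
      have hHsubG : H.IsSubgraph G := by
        refine ⟨?_, fun d e he => ?_⟩
        · rw [hHv]
          intro u hu
          rcases Finset.mem_insert.mp hu with rfl | hu
          · exact hyV
          · exact Finset.erase_subset _ _ (hsubV hu)
        · rw [hHe d, Finset.mem_filter] at he
          exact ((hS_mem d e).mp he.1).1
      have hHimg : ∀ d, (H.edges d).image (Sym2.map m) = H'.edges d := by
        intro d
        apply Finset.Subset.antisymm
        · intro e he
          obtain ⟨e₀, he₀, rfl⟩ := Finset.mem_image.mp he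
          rw [hHe d, Finset.mem_filter] at he₀
          exact he₀.2
        · intro e he
          have hmem := hsubE d he
          rw [hG'e d] at hmem
          obtain ⟨e₀, he₀, rfl⟩ := Finset.mem_image.mp hmem
          exact Finset.mem_image.mpr ⟨e₀,
            by rw [hHe d, Finset.mem_filter]; exact ⟨he₀, he⟩, rfl⟩
      have hle : ∀ d, (H'.edges d).card ≤ (H.edges d).card := by
        intro d
        rw [← hHimg d]
        exact Finset.card_image_le
      have hleE : H'.edgeCount ≤ H.edgeCount :=
        Nat.add_le_add (hle Col.b) (hle Col.r)
      -- add back the edge (x,y) of colour c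
      have hxyH : s(x, y) ∉ H.edges c := by
        intro h
        rw [hHe c, Finset.mem_filter] at h
        exact ((hS_mem c _).mp h.1).2 rfl
      have hxyd : ¬ (s(x, y) : Sym2 α).IsDiag := by
        rw [Sym2.mk_isDiag_iff]; exact hxy
      have hxH1 : x ∈ H.verts := by rw [hHv]; exact Finset.mem_insert_of_mem hxH
      have hyH1 : y ∈ H.verts := by rw [hHv]; exact Finset.mem_insert_self _ _
      have hxyV : ∀ u ∈ (s(x, y) : Sym2 α), u ∈ H.verts := by
        intro u hu
        rcases Sym2.mem_iff.mp hu with rfl | rfl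
        exacts [hxH1, hyH1]
      set H1 : BiGraph α := H.addE c s(x, y) hxyd hxyV with hH1_def
      have hH1v : H1.verts = H.verts := BiGraph.addE_verts _ _ _ _ _
      have hH1sub : H1.IsSubgraph G := BiGraph.addE_isSubgraph _ _ _ _ _ _ hHsubG hexy
      have hH1ec : H1.edgeCount = H.edgeCount + 1 :=
        BiGraph.addE_edgeCount _ _ _ _ _ hxyH
      have hH1count := hG.1 H1 hH1sub
        (BiGraph.edgeCount_pos_of_mem _ c _ (BiGraph.addE_mem _ _ _ _ _))
      have hH1card : H1.verts.card = H'.verts.card + 1 := by rw [hH1v, hHcard]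
      by_cases hzH : z ∈ H'.verts
      · by_cases hxzH : s(x, z) ∈ H'.edges c
        · -- both preimages of s(x,z) lie in H
          have hxzHc : s(x, z) ∈ H.edges c := by
            rw [hHe c, Finset.mem_filter]
            exact ⟨hxzS, by rw [hmapxz]; exact hxzH⟩
          have hyzHc : s(y, z) ∈ H.edges c := by
            rw [hHe c, Finset.mem_filter]
            exact ⟨hyzS, by rw [hmapyz]; exact hxzH⟩
          have hcc := himg_card (H.edges c) (hHsubG.2 c) hxzHc hyzHc
          rw [hHimg c] at hcc
          have h1pos : 1 ≤ (H.edges c).card := Finset.card_pos.mpr ⟨_, hxzHc⟩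
          have hD : H'.edgeCount + 1 ≤ H.edgeCount := by
            have hb := hle Col.b
            have hr := hle Col.r
            unfold BiGraph.edgeCount
            cases c <;> omega
          omega
        · -- add also the edge (y,z) of colour c
          have hzH1 : z ∈ H1.verts := by
            rw [hH1v, hHv]; exact Finset.mem_insert_of_mem hzH
          have hyH2 : y ∈ H1.verts := by rw [hH1v]; exact hyH1
          have hyzd : ¬ (s(y, z) : Sym2 α).IsDiag := by
            rw [Sym2.mk_isDiag_iff]; exact hyz
          have hyzV : ∀ u ∈ (s(y, z) : Sym2 α), u ∈ H1.verts := by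
            intro u hu
            rcases Sym2.mem_iff.mp hu with rfl | rfl
            exacts [hyH2, hzH1]
          have hyzH1 : s(y, z) ∉ H1.edges c := by
            rw [hH1_def, BiGraph.addE_edges, if_pos rfl]
            intro h
            rcases Finset.mem_insert.mp h with h | h
            · exact hyz_ne_xy h
            · rw [hHe c, Finset.mem_filter, hmapyz] at h
              exact hxzH h.2
          have hH2sub : (H1.addE c s(y, z) hyzd hyzV).IsSubgraph G :=
            BiGraph.addE_isSubgraph _ _ _ _ _ _ hH1sub heyz
          have hH2ec : (H1.addE c s(y, z) hyzd hyzV).edgeCount = H1.edgeCount + 1 :=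
            BiGraph.addE_edgeCount _ _ _ _ _ hyzH1
          have hH2v : (H1.addE c s(y, z) hyzd hyzV).verts = H1.verts :=
            BiGraph.addE_verts _ _ _ _ _
          have hH2count := hG.1 _ hH2sub
            (BiGraph.edgeCount_pos_of_mem _ c _ (BiGraph.addE_mem _ _ _ _ _))
          rw [hH2ec, hH2v] at hH2count
          omega
      · -- z outside : use the f(Y) = 2 hypothesis
        push_neg at hY
        have hzH1 : z ∉ H1.verts := by
          rw [hH1v, hHv]
          intro h
          rcases Finset.mem_insert.mp h with h | h
          · exact hyz h.symm
          · exact hzH h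
        have hxH2 : x ∈ H1.verts := by rw [hH1v]; exact hxH1
        have hyH2 : y ∈ H1.verts := by rw [hH1v]; exact hyH1
        have hne2 : H1.fcount ≠ 2 := fun hf => hzH1 (hY H1 hH1sub hf hxH2 hyH2)
        unfold BiGraph.fcount at hne2
        omega
    · -- x ∉ H'.verts : H' is already a subgraph of G
      have hsubG : H'.IsSubgraph G := by
        refine ⟨hsubV.trans (Finset.erase_subset _ _), fun d e he => ?_⟩
        have hmem := hsubE d he
        rw [hG'e d] at hmem
        obtain ⟨e₀, he₀, heq⟩ := Finset.mem_image.mp hmem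
        by_cases hy0 : y ∈ e₀
        · exact absurd ((H'.valid d e he).2 x (heq ▸ hmap_x e₀ hy0)) hxH
        · rw [← heq, hmap_fix e₀ hy0]
          exact ((hS_mem d e₀).mp he₀).1
      exact hG.1 H' hsubG hpos
  · -- tight count
    have e1 : (G'.edges Col.b).card = ((S Col.b).image (Sym2.map m)).card := by
      rw [hG'e]
    have e2 : (G'.edges Col.r).card = ((S Col.r).image (Sym2.map m)).card := by
      rw [hG'e]
    have e3 : G'.verts.card = G.verts.card - 1 := by rw [hG'v]; exact hVc
    have hg := hG.2
    unfold BiGraph.edgeCount at hg ⊢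
    cases c
    · have h4 := hcard_ne Col.r (by decide)
      omega
    · have h4 := hcard_ne Col.b (by decide)
      omega
end
end
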